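/- For 0 ≤ σ₁, σ₂ ≤ 1 with σ₁ + σ₂ ≤ 1, and for f ∈ S(ℝ^{n+1}) (Schwartz), the function m(ξ,τ) = iτ |ξ|^{σ₂} m_{1-σ₁}(τ) / ( |ξ|^{σ₁+σ₂} + iτ m_{1-σ₁-σ₂}(τ) ), where m_σ(τ) = (a_σ - i b_σ sign τ)|τ|^{-σ}, is bounded: there is C > 0 with |m(ξ,τ)| ≤ C for all ξ ∈ ℝ^n, ξ ≠ 0, τ ∈ ℝ, τ ≠ 0. -/

import Mathlib

set_option maxHeartbeats 1000000

open MeasureTheory Real Set Filter intervalIntegral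


lemma II {s a b : ℝ} (ha : 0 < a) (hb : 0 < b) :
    IntervalIntegrable (fun t => Real.sin t / t ^ s) volume a b := by
  apply ContinuousOn.intervalIntegrable
  intro x hx
  have hx0 : 0 < x := lt_of_lt_of_le (lt_min ha hb) hx.1
  exact Real.continuous_sin.continuousAt.continuousWithinAt.div
    ((Real.continuousAt_rpow_const x s (Or.inl hx0.ne')).continuousWithinAt)
    (Real.rpow_pos_of_pos hx0 s).ne'

lemma block {s A : ℝ} (hs : 0 ≤ s) (hA : 0 < A)
    (hsin : ∀ u ∈ Set.Icc A (A + Real.pi), 0 ≤ Real.sin u) :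
    0 ≤ ∫ t in A..(A + 2*Real.pi), Real.sin t / t ^ s := by
  have hpi := Real.pi_pos
  have h1 : 0 < A + Real.pi := by linarith
  have hsplit : (∫ t in A..(A+Real.pi), Real.sin t / t ^ s) +
      (∫ t in (A+Real.pi)..(A+2*Real.pi), Real.sin t / t ^ s)
      = ∫ t in A..(A + 2*Real.pi), Real.sin t / t ^ s :=
    intervalIntegral.integral_add_adjacent_intervals (II hA h1) (II h1 (by linarith))
  have hshift : (∫ t in (A+Real.pi)..(A+2*Real.pi), Real.sin t / t ^ s)
      = ∫ u in A..(A+Real.pi), Real.sin (u+Real.pi) / (u+Real.pi) ^ s := by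
    rw [intervalIntegral.integral_comp_add_right (fun t => Real.sin t / t ^ s) Real.pi]
    ring_nf
  have hII2 : IntervalIntegrable (fun u => Real.sin (u+Real.pi) / (u+Real.pi) ^ s)
      volume A (A+Real.pi) := by
    apply ContinuousOn.intervalIntegrable
    intro x hx
    have hx0 : 0 < x + Real.pi := by
      have := hx.1; rw [min_def] at this
      split_ifs at this <;> nlinarith
    exact ((Real.continuous_sin.comp (continuous_add_right Real.pi)).continuousAt.continuousWithinAt).div
      (((continuous_add_right Real.pi).continuousAt.rpow_const (Or.inl hx0.ne')).continuousWithinAt)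
      (Real.rpow_pos_of_pos hx0 s).ne'
  rw [← hsplit, hshift, ← intervalIntegral.integral_add (II hA h1) hII2]
  apply intervalIntegral.integral_nonneg (by linarith)
  intro u hu
  have hu0 : 0 < u := lt_of_lt_of_le hA hu.1
  have hsu := hsin u hu
  have h2 : u ^ s ≤ (u + Real.pi) ^ s := Real.rpow_le_rpow hu0.le (by linarith) hs
  have h3 : Real.sin u / (u+Real.pi) ^ s ≤ Real.sin u / u ^ s :=
    div_le_div_of_nonneg_left hsu (Real.rpow_pos_of_pos hu0 s) h2
  rw [Real.sin_add_pi]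
  have : -Real.sin u / (u+Real.pi)^s = -(Real.sin u / (u+Real.pi)^s) := by ring
  rw [this]
  linarith

lemma lower {s ε : ℝ} (hs : 0 ≤ s) (hε : 0 < ε) (hε1 : ε ≤ 1) :
    Real.pi ^ (-s) * (2 ^ s * Real.cos ε - 1) ≤ ∫ t in ε..(2*Real.pi), Real.sin t / t ^ s := by
  have hpi := Real.pi_pos
  have hpi2 : ε ≤ Real.pi/2 := by nlinarith [Real.pi_gt_three]
  have hsplit : (∫ t in ε..(Real.pi/2), Real.sin t / t ^ s) +
      (∫ t in (Real.pi/2)..(2*Real.pi), Real.sin t / t ^ s)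
      = ∫ t in ε..(2*Real.pi), Real.sin t / t ^ s :=
    intervalIntegral.integral_add_adjacent_intervals (II hε (by linarith)) (II (by linarith) (by linarith))
  have hps : (0:ℝ) < Real.pi ^ s := Real.rpow_pos_of_pos hpi s
  have hp2s : (0:ℝ) < (Real.pi/2) ^ s := Real.rpow_pos_of_pos (by linarith) s
  have hdivrpow : (Real.pi/2) ^ s = Real.pi ^ s / 2 ^ s := Real.div_rpow hpi.le (by norm_num : (0:ℝ) ≤ 2) s
  have h1 : Real.cos ε / (Real.pi/2) ^ s ≤ ∫ t in ε..(Real.pi/2), Real.sin t / t ^ s := by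
    have hmono : (∫ t in ε..(Real.pi/2), Real.sin t / (Real.pi/2) ^ s)
        ≤ ∫ t in ε..(Real.pi/2), Real.sin t / t ^ s := by
      apply intervalIntegral.integral_mono_on hpi2
        ((Real.continuous_sin.div_const _).intervalIntegrable _ _) (II hε (by linarith))
      intro t ht
      have ht0 : 0 < t := lt_of_lt_of_le hε ht.1
      have hsint : 0 ≤ Real.sin t := Real.sin_nonneg_of_nonneg_of_le_pi ht0.le (by linarith [ht.2])
      exact div_le_div_of_nonneg_left hsint (Real.rpow_pos_of_pos ht0 s)
        (Real.rpow_le_rpow ht0.le ht.2 hs)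
    calc Real.cos ε / (Real.pi/2) ^ s
        = (∫ t in ε..(Real.pi/2), Real.sin t) / (Real.pi/2) ^ s := by
          rw [integral_sin, Real.cos_pi_div_two]; ring_nf
      _ = ∫ t in ε..(Real.pi/2), Real.sin t / (Real.pi/2) ^ s := by
          rw [intervalIntegral.integral_div]
      _ ≤ _ := hmono
  have h2 : -(1 / Real.pi ^ s) ≤ ∫ t in (Real.pi/2)..(2*Real.pi), Real.sin t / t ^ s := by
    have hmono : (∫ t in (Real.pi/2)..(2*Real.pi), Real.sin t / Real.pi ^ s)
        ≤ ∫ t in (Real.pi/2)..(2*Real.pi), Real.sin t / t ^ s := by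
      apply intervalIntegral.integral_mono_on (by linarith)
        ((Real.continuous_sin.div_const _).intervalIntegrable _ _) (II (by linarith) (by linarith))
      intro t ht
      have ht0 : 0 < t := lt_of_lt_of_le (by linarith) ht.1
      rcases le_total t Real.pi with htp | htp
      · have hsint : 0 ≤ Real.sin t := Real.sin_nonneg_of_nonneg_of_le_pi ht0.le htp
        exact div_le_div_of_nonneg_left hsint (Real.rpow_pos_of_pos ht0 s)
          (Real.rpow_le_rpow ht0.le htp hs)
      · have hsint : Real.sin t ≤ 0 := by
          have h := Real.sin_nonneg_of_nonneg_of_le_pi (x := t - Real.pi) (by linarith) (by linarith [ht.2])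
          have : Real.sin (t - Real.pi + Real.pi) = -Real.sin (t - Real.pi) := Real.sin_add_pi _
          simp only [sub_add_cancel] at this
          linarith
        have hts : Real.pi ^ s ≤ t ^ s := Real.rpow_le_rpow hpi.le htp hs
        have hd : (-Real.sin t) / t ^ s ≤ (-Real.sin t) / Real.pi ^ s :=
          div_le_div_of_nonneg_left (by linarith) hps hts
        rw [neg_div, neg_div] at hd
        linarith
    calc -(1 / Real.pi ^ s)
        = (∫ t in (Real.pi/2)..(2*Real.pi), Real.sin t) / Real.pi ^ s := by
          rw [integral_sin, Real.cos_pi_div_two, Real.cos_two_pi]; ring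
      _ = ∫ t in (Real.pi/2)..(2*Real.pi), Real.sin t / Real.pi ^ s := by
          rw [intervalIntegral.integral_div]
      _ ≤ _ := hmono
  rw [← hsplit]
  have heq : Real.pi ^ (-s) * (2 ^ s * Real.cos ε - 1)
      = Real.cos ε / (Real.pi/2) ^ s + -(1 / Real.pi ^ s) := by
    rw [Real.rpow_neg hpi.le, hdivrpow]
    field_simp
    ring
  rw [heq]
  exact add_le_add h1 h2

lemma tail {s ε : ℝ} (hs : 0 ≤ s) (hε : 0 < ε) (hε1 : ε ≤ 1) (k : ℕ) :
    (∫ t in ε..(2*Real.pi), Real.sin t / t ^ s)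
      ≤ ∫ t in ε..(2*Real.pi*(k+1)), Real.sin t / t ^ s := by
  have hpi := Real.pi_pos
  induction k with
  | zero => norm_num
  | succ k ih =>
    have hA : (0:ℝ) < 2*Real.pi*(k+1) := by positivity
    have hε2 : ε < 2*Real.pi*(k+1) := by nlinarith [Real.pi_gt_three, Nat.cast_nonneg (α := ℝ) k]
    have hsplit : (∫ t in ε..(2*Real.pi*(k+1)), Real.sin t / t ^ s) +
        (∫ t in (2*Real.pi*(k+1))..(2*Real.pi*(k+1) + 2*Real.pi), Real.sin t / t ^ s)
        = ∫ t in ε..(2*Real.pi*(k+1) + 2*Real.pi), Real.sin t / t ^ s :=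
      intervalIntegral.integral_add_adjacent_intervals (II hε hA) (II hA (by linarith))
    have hblock : 0 ≤ ∫ t in (2*Real.pi*(k+1))..(2*Real.pi*(k+1) + 2*Real.pi),
        Real.sin t / t ^ s := by
      apply block hs hA
      intro u hu
      have h1 : Real.sin (u - ((k:ℕ)+1) * (2*Real.pi) + ((k:ℕ)+1) * (2*Real.pi)) =
          Real.sin (u - ((k:ℕ)+1) * (2*Real.pi)) := by
        exact_mod_cast Real.sin_add_nat_mul_two_pi (u - ((k:ℕ)+1) * (2*Real.pi)) (k+1)
      have h2 : u - (((k:ℕ)+1) : ℝ) * (2*Real.pi) + (((k:ℕ)+1) : ℝ) * (2*Real.pi) = u := by ring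
      rw [h2] at h1
      rw [h1]
      have hu1 := hu.1
      have hu2 := hu.2
      apply Real.sin_nonneg_of_nonneg_of_le_pi
      · push_cast; nlinarith
      · push_cast; nlinarith
    have hfin : (2*Real.pi*(k+1) + 2*Real.pi) = 2*Real.pi*((k+1:ℕ)+1) := by push_cast; ring
    calc (∫ t in ε..(2*Real.pi), Real.sin t / t ^ s)
        ≤ ∫ t in ε..(2*Real.pi*(k+1)), Real.sin t / t ^ s := ih
      _ ≤ _ := by rw [← hfin, ← hsplit]; linarith

lemma b_pos {s : ℝ} (hs0 : 0 < s) (hs1 : s < 1) {bv : ℝ}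
    (hb : Tendsto (fun q : ℝ × ℝ => ∫ t in q.1..q.2, Real.sin t / t ^ s)
        ((nhdsWithin 0 (Set.Ioi 0)) ×ˢ Filter.atTop) (nhds bv)) : 0 < bv := by
  have hpi := Real.pi_pos
  set e : ℕ → ℝ := fun n => ((n:ℝ)+1)⁻¹ with he
  set R : ℕ → ℝ := fun n => 2*Real.pi*((n:ℝ)+1) with hR
  have he0 : ∀ n, 0 < e n := fun n => by positivity
  have he1 : ∀ n, e n ≤ 1 := fun n => by
    rw [he]
    exact inv_le_one_of_one_le₀ (by push_cast; linarith [Nat.cast_nonneg (α := ℝ) n])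
  have hte0 : Tendsto e atTop (nhds 0) := by
    have := tendsto_one_div_add_atTop_nhds_zero_nat (𝕜 := ℝ)
    simpa [one_div] using this
  have hte : Tendsto e atTop (nhdsWithin 0 (Set.Ioi 0)) :=
    tendsto_nhdsWithin_of_tendsto_nhds_of_eventually_within _ hte0
      (Filter.Eventually.of_forall fun n => he0 n)
  have htR : Tendsto R atTop atTop := by
    apply Filter.Tendsto.const_mul_atTop (by linarith : (0:ℝ) < 2*Real.pi)
    exact tendsto_atTop_add_const_right _ 1 tendsto_natCast_atTop_atTop
  have hcomp := hb.comp (hte.prodMk htR)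
  have hg : Tendsto (fun n => Real.pi ^ (-s) * (2 ^ s * Real.cos (e n) - 1)) atTop
      (nhds (Real.pi ^ (-s) * (2 ^ s * 1 - 1))) := by
    apply Tendsto.const_mul
    apply Tendsto.sub_const
    apply Tendsto.const_mul
    have : Tendsto (fun n => Real.cos (e n)) atTop (nhds (Real.cos 0)) :=
      (Real.continuous_cos.tendsto 0).comp hte0
    simpa [Real.cos_zero] using this
  have hle : Real.pi ^ (-s) * (2 ^ s * 1 - 1) ≤ bv := by
    apply le_of_tendsto_of_tendsto' hg hcomp
    intro n
    simp only [Function.comp_apply]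
    exact (lower hs0.le (he0 n) (he1 n)).trans (tail hs0.le (he0 n) (he1 n) n)
  have h2s : (1:ℝ) < 2 ^ s :=
    (Real.one_lt_rpow_iff_of_pos (by norm_num)).mpr (Or.inl ⟨one_lt_two, hs0⟩)
  have : 0 < Real.pi ^ (-s) * (2 ^ s * 1 - 1) := by
    have := Real.rpow_pos_of_pos hpi (-s)
    nlinarith
  linarith

/-- Boundedness of the anisotropic symbol
`iτ |ξ|^{σ₂} m_{1-σ₁}(τ) / (|ξ|^{σ₁+σ₂} + iτ m_{1-σ₁-σ₂}(τ))`,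
where `m_σ(τ) = (a_σ - i b_σ sign τ)|τ|^{-σ}` and `m_0 = 1`. -/

theorem anisotropic_symbol_bounded (n : ℕ) (σ₁ σ₂ : ℝ)
    (h1 : 0 ≤ σ₁) (h1' : σ₁ ≤ 1) (h2 : 0 ≤ σ₂) (h2' : σ₂ ≤ 1) (hsum : σ₁ + σ₂ ≤ 1)
    (a b : ℝ → ℝ)
    (ha : ∀ σ : ℝ, 0 < σ → σ < 1 →
      Tendsto (fun q : ℝ × ℝ => ∫ t in q.1..q.2, Real.cos t / t ^ σ)
        ((nhdsWithin 0 (Set.Ioi 0)) ×ˢ Filter.atTop) (nhds (a σ)))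
    (hb : ∀ σ : ℝ, 0 < σ → σ < 1 →
      Tendsto (fun q : ℝ × ℝ => ∫ t in q.1..q.2, Real.sin t / t ^ σ)
        ((nhdsWithin 0 (Set.Ioi 0)) ×ˢ Filter.atTop) (nhds (b σ)))
    (ha0 : a 0 = 1) (hb0 : b 0 = 0) (ha1 : a 1 = 0) (hb1 : b 1 = Real.pi / 2) :
    ∃ C > 0, ∀ ξ : EuclideanSpace ℝ (Fin n), ξ ≠ 0 → ∀ τ : ℝ, τ ≠ 0 →
      norm
        ((Complex.I * (τ : ℂ) * ((‖ξ‖ ^ σ₂ : ℝ) : ℂ)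
            * (((a (1 - σ₁) : ℝ) : ℂ) - Complex.I * ((b (1 - σ₁) : ℝ) : ℂ)
                  * ((Real.sign τ : ℝ) : ℂ))
            * (((|τ| ^ (-(1 - σ₁)) : ℝ) : ℝ) : ℂ))
          / (((‖ξ‖ ^ (σ₁ + σ₂) : ℝ) : ℂ)
              + Complex.I * (τ : ℂ)
                * (((a (1 - σ₁ - σ₂) : ℝ) : ℂ) - Complex.I * ((b (1 - σ₁ - σ₂) : ℝ) : ℂ)
                      * ((Real.sign τ : ℝ) : ℂ))
                * (((|τ| ^ (-(1 - σ₁ - σ₂)) : ℝ) : ℝ) : ℂ)))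
        ≤ C := by
  have hpi := Real.pi_pos
  -- sign facts about the coefficients in the denominator
  have hkey : 0 ≤ b (1 - σ₁ - σ₂) ∧ 0 < max (b (1 - σ₁ - σ₂)) |a (1 - σ₁ - σ₂)| := by
    rcases eq_or_lt_of_le (by linarith : (0:ℝ) ≤ σ₁ + σ₂) with hc0 | hc0
    · have h : 1 - σ₁ - σ₂ = 1 := by linarith
      rw [h, hb1, ha1]
      constructor
      · linarith
      · exact lt_max_iff.mpr (Or.inl (by linarith))
    · rcases eq_or_lt_of_le hsum with hc1 | hc1
      · have h : 1 - σ₁ - σ₂ = 0 := by linarith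
        rw [h, hb0, ha0]
        exact ⟨le_refl _, lt_max_iff.mpr (Or.inr (by norm_num))⟩
      · have hBpos : 0 < b (1 - σ₁ - σ₂) :=
          b_pos (by linarith) (by linarith) (hb (1 - σ₁ - σ₂) (by linarith) (by linarith))
        exact ⟨hBpos.le, lt_max_iff.mpr (Or.inl hBpos)⟩
  obtain ⟨hB'0, hβ⟩ := hkey
  set A := a (1 - σ₁) with hA
  set B := b (1 - σ₁) with hB
  set A' := a (1 - σ₁ - σ₂) with hA'
  set B' := b (1 - σ₁ - σ₂) with hB'
  set K := |A| + |B| with hK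
  set β := max B' |A'| with hβdef
  set c := min 1 β with hc
  have hc0 : 0 < c := lt_min one_pos hβ
  have hK0 : 0 ≤ K := by positivity
  refine ⟨K / c + 1, by positivity, ?_⟩
  intro ξ hξ τ hτ
  set r := ‖ξ‖ with hrdef
  have hr : 0 < r := norm_pos_iff.mpr hξ
  set t := |τ| with htdef
  have ht : 0 < t := abs_pos.mpr hτ
  set g := Real.sign τ with hgdef
  have hg' : g = 1 ∨ g = -1 := by
    rcases hτ.lt_or_gt with h | h
    · exact Or.inr (Real.sign_of_neg h)
    · exact Or.inl (Real.sign_of_pos h)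
  have hgt : g * t = τ := by
    rcases hτ.lt_or_gt with h | h
    · rw [hgdef, Real.sign_of_neg h, htdef, abs_of_neg h]; ring
    · rw [hgdef, Real.sign_of_pos h, htdef, abs_of_pos h]; ring
  have hτC : (τ : ℂ) = (g : ℂ) * (t : ℂ) := by exact_mod_cast congrArg Complex.ofReal hgt.symm
  have hM : 0 < max r t := lt_max_iff.mpr (Or.inl hr)
  set M := max r t with hMdef
  have htt : t * t ^ (-(1 - σ₁ - σ₂)) = t ^ (σ₁ + σ₂) := by
    rw [show σ₁ + σ₂ = 1 + -(1 - σ₁ - σ₂) by ring, Real.rpow_add ht, Real.rpow_one]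
  -- numerator bound
  have hnum : norm (Complex.I * (τ : ℂ) * ((r ^ σ₂ : ℝ) : ℂ)
      * (((A : ℝ) : ℂ) - Complex.I * ((B : ℝ) : ℂ) * ((g : ℝ) : ℂ))
      * (((t ^ (-(1 - σ₁)) : ℝ) : ℝ) : ℂ)) ≤ K * M ^ (σ₁ + σ₂) := by
    have habs : norm (((A : ℝ) : ℂ) - Complex.I * ((B : ℝ) : ℂ) * ((g : ℝ) : ℂ)) ≤ K := by
      calc norm (((A : ℝ) : ℂ) - Complex.I * ((B : ℝ) : ℂ) * ((g : ℝ) : ℂ))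
          ≤ norm ((A : ℝ) : ℂ) + norm (Complex.I * ((B : ℝ) : ℂ) * ((g : ℝ) : ℂ)) :=
            norm_sub_le _ _
        _ ≤ K := by
          simp only [norm_mul, Complex.norm_I, Complex.norm_real, Real.norm_eq_abs, one_mul]
          rcases hg' with h | h <;> rw [h] <;> simp [hK]
    have hexp : t * t ^ (-(1 - σ₁)) = t ^ σ₁ := by
      conv_rhs => rw [show σ₁ = 1 + -(1 - σ₁) by ring, Real.rpow_add ht, Real.rpow_one]
    have step1 : norm (Complex.I * (τ : ℂ) * ((r ^ σ₂ : ℝ) : ℂ)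
        * (((A : ℝ) : ℂ) - Complex.I * ((B : ℝ) : ℂ) * ((g : ℝ) : ℂ))
        * (((t ^ (-(1 - σ₁)) : ℝ) : ℝ) : ℂ))
        = t * r ^ σ₂ * norm (((A : ℝ) : ℂ) - Complex.I * ((B : ℝ) : ℂ) * ((g : ℝ) : ℂ))
          * t ^ (-(1 - σ₁)) := by
      simp only [norm_mul, Complex.norm_I, Complex.norm_real, Real.norm_eq_abs, one_mul]
      rw [abs_of_nonneg (Real.rpow_nonneg hr.le _), abs_of_nonneg (Real.rpow_nonneg ht.le _)]
      try rw [← htdef]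
      try ring
    rw [step1]
    have hb1' : t * r ^ σ₂ * norm (((A : ℝ) : ℂ) - Complex.I * ((B : ℝ) : ℂ) * ((g : ℝ) : ℂ))
        * t ^ (-(1 - σ₁)) ≤ t * r ^ σ₂ * K * t ^ (-(1 - σ₁)) := by
      have h := mul_le_mul_of_nonneg_left habs (by positivity : (0:ℝ) ≤ t * r ^ σ₂)
      exact mul_le_mul_of_nonneg_right h (Real.rpow_nonneg ht.le _)
    refine hb1'.trans ?_
    have : t * r ^ σ₂ * K * t ^ (-(1 - σ₁)) = K * (r ^ σ₂ * t ^ σ₁) := by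
      rw [← hexp]; ring
    rw [this]
    have hr2 : r ^ σ₂ ≤ M ^ σ₂ := Real.rpow_le_rpow hr.le (le_max_left _ _) h2
    have ht2 : t ^ σ₁ ≤ M ^ σ₁ := Real.rpow_le_rpow ht.le (le_max_right _ _) h1
    have : r ^ σ₂ * t ^ σ₁ ≤ M ^ (σ₁ + σ₂) := by
      calc r ^ σ₂ * t ^ σ₁ ≤ M ^ σ₂ * M ^ σ₁ :=
            mul_le_mul hr2 ht2 (Real.rpow_nonneg ht.le _) (Real.rpow_nonneg hM.le _)
        _ = M ^ (σ₁ + σ₂) := by rw [← Real.rpow_add hM]; ring_nf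
    exact mul_le_mul_of_nonneg_left this hK0
  -- denominator bound
  set D : ℂ := ((r ^ (σ₁ + σ₂) : ℝ) : ℂ)
      + Complex.I * (τ : ℂ) * (((A' : ℝ) : ℂ) - Complex.I * ((B' : ℝ) : ℂ) * ((g : ℝ) : ℂ))
        * (((t ^ (-(1 - σ₁ - σ₂)) : ℝ) : ℝ) : ℂ) with hD
  have hDeq : D = ((r ^ (σ₁ + σ₂) + B' * t ^ (σ₁ + σ₂) : ℝ) : ℂ)
      + ((g * A' * t ^ (σ₁ + σ₂) : ℝ) : ℂ) * Complex.I := by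
    rw [hD, hτC]
    apply Complex.ext <;>
      simp only [Complex.add_re, Complex.add_im, Complex.mul_re, Complex.mul_im,
        Complex.sub_re, Complex.sub_im, Complex.I_re, Complex.I_im, Complex.ofReal_re,
        Complex.ofReal_im] <;>
      rw [← htt] <;>
      rcases hg' with h | h <;> rw [h] <;> ring
  have hre : D.re = r ^ (σ₁ + σ₂) + B' * t ^ (σ₁ + σ₂) := by rw [hDeq]; simp
  have him : D.im = g * A' * t ^ (σ₁ + σ₂) := by rw [hDeq]; simp
  have hrp : (0:ℝ) < r ^ (σ₁ + σ₂) := Real.rpow_pos_of_pos hr _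
  have htp : (0:ℝ) < t ^ (σ₁ + σ₂) := Real.rpow_pos_of_pos ht _
  have hd1 : r ^ (σ₁ + σ₂) ≤ norm D := by
    have h := Complex.abs_re_le_norm D
    rw [hre] at h
    have : r ^ (σ₁ + σ₂) ≤ |r ^ (σ₁ + σ₂) + B' * t ^ (σ₁ + σ₂)| := by
      refine le_trans ?_ (le_abs_self _)
      nlinarith
    linarith
  have hd2 : β * t ^ (σ₁ + σ₂) ≤ norm D := by
    rcases max_choice B' |A'| with h | h <;> rw [hβdef, h]
    · have hh := Complex.abs_re_le_norm D
      rw [hre] at hh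
      have : B' * t ^ (σ₁ + σ₂) ≤ |r ^ (σ₁ + σ₂) + B' * t ^ (σ₁ + σ₂)| := by
        refine le_trans ?_ (le_abs_self _)
        nlinarith
      linarith
    · have hh := Complex.abs_im_le_norm D
      rw [him] at hh
      have : |g * A' * t ^ (σ₁ + σ₂)| = |A'| * t ^ (σ₁ + σ₂) := by
        rw [abs_mul, abs_mul]
        rcases hg' with hg1 | hg1 <;> rw [hg1] <;>
          simp [abs_of_nonneg htp.le]
      rw [this] at hh
      exact hh
  have hden : c * M ^ (σ₁ + σ₂) ≤ norm D := by
    rcases max_choice r t with h | h <;> rw [hMdef, h]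
    · calc c * r ^ (σ₁ + σ₂) ≤ 1 * r ^ (σ₁ + σ₂) :=
            mul_le_mul_of_nonneg_right (min_le_left _ _) hrp.le
        _ = r ^ (σ₁ + σ₂) := one_mul _
        _ ≤ norm D := hd1
    · calc c * t ^ (σ₁ + σ₂) ≤ β * t ^ (σ₁ + σ₂) :=
            mul_le_mul_of_nonneg_right (min_le_right _ _) htp.le
        _ ≤ norm D := hd2
  -- conclusion
  have hMp : (0:ℝ) < M ^ (σ₁ + σ₂) := Real.rpow_pos_of_pos hM _
  rw [norm_div]
  calc norm (Complex.I * (τ : ℂ) * ((r ^ σ₂ : ℝ) : ℂ)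
      * (((A : ℝ) : ℂ) - Complex.I * ((B : ℝ) : ℂ) * ((g : ℝ) : ℂ))
      * (((t ^ (-(1 - σ₁)) : ℝ) : ℝ) : ℂ)) / norm D
      ≤ (K * M ^ (σ₁ + σ₂)) / (c * M ^ (σ₁ + σ₂)) :=
        div_le_div₀ (by positivity) hnum (by positivity) hden
    _ = K / c := mul_div_mul_right _ _ hMp.ne'
    _ ≤ K / c + 1 := by linarith
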